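/- Graded duality shift: For any multiarrangement (A,m) in K^ℓ, there is a graded S-module isomorphism D^p(A,m) ≅ Q(A,m) · Ω^{ℓ-p}(A,m) for all 0 ≤ p ≤ ℓ; in particular reg D^p(A,m) = |m| + reg Ω^{ℓ-p}(A,m). -/
import Mathlib


open MvPolynomial Finset

noncomputable section

namespace STpaper

variable {K : Type*} [Field K] {ℓ : ℕ}

/-- The polynomial ring `S = K[x_1,…,x_ℓ]`. -/
abbrev S (K : Type*) [Field K] (ℓ : ℕ) := MvPolynomial (Fin ℓ) K

/-- The linear form with coefficient vector `a`. -/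
def lin (a : Fin ℓ → K) : S K ℓ := ∑ i, C (a i) * X i

/-- A (central) multiarrangement in `K^ℓ`: a finite family of pairwise
non-proportional nonzero linear forms together with positive multiplicities. -/
structure MultiArr (K : Type*) [Field K] (ℓ : ℕ) (ι : Type*) [Fintype ι] where
  α : ι → Fin ℓ → K
  nonzero : ∀ H, α H ≠ 0
  nonprop : ∀ H H', H ≠ H' → ∀ c : K, α H ≠ c • α H'
  m : ι → ℕ
  mpos : ∀ H, 0 < m H

variable {ι : Type*} [Fintype ι]

/-- `|m|`, the total multiplicity. -/
def MultiArr.size (A : MultiArr K ℓ ι) : ℕ := ∑ H, A.m H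

/-- The defining polynomial `Q(A,m) = ∏ α_H^{m(H)}`. -/
def MultiArr.Q (A : MultiArr K ℓ ι) : S K ℓ := ∏ H, lin (A.α H) ^ A.m H

/-- Essential: the linear forms span the dual space. -/
def MultiArr.Essential (A : MultiArr K ℓ ι) : Prop :=
  Submodule.span K (Set.range A.α) = ⊤

/-- Index type for the standard basis of `∧^p Der S`: `p`-element subsets of `Fin ℓ`. -/
abbrev Sub (ℓ p : ℕ) := {s : Finset (Fin ℓ) // s.card = p}

/-- `det (∂_{i_j} f_k)` for the increasing enumeration `i_1 < … < i_p` of `s`. -/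
def detM {p : ℕ} (s : Sub ℓ p) (f : Fin p → S K ℓ) : S K ℓ :=
  Matrix.det (Matrix.of fun j k : Fin p => pderiv (s.1.orderIsoOfFin s.2 j).1 (f k))

/-- Evaluation of a `p`-derivation (given by its coefficients `c`) on the
`p`-tuple of polynomials `f`, as a linear map in `c`. -/
def evalD (p : ℕ) (f : Fin p → S K ℓ) : ((Sub ℓ p) → S K ℓ) →ₗ[S K ℓ] S K ℓ where
  toFun c := ∑ s, c s * detM s f
  map_add' a b := by simp [add_mul, Finset.sum_add_distrib]
  map_smul' r a := by simp [smul_eq_mul, Finset.mul_sum, mul_assoc]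

/-- The logarithmic derivation module `D^p(A,m)`:
`θ ∈ ∧^p Der S` with `θ(α_H, f_2, …, f_p) ∈ S·α_H^{m(H)}` for all `H` and `f_i`. -/
def Dmod (A : MultiArr K ℓ ι) (p : ℕ) : Submodule (S K ℓ) ((Sub ℓ p) → S K ℓ) where
  carrier := {c | ∀ H : ι, ∀ f : Fin p → S K ℓ, ∀ j : Fin p, (j : ℕ) = 0 →
      f j = lin (A.α H) → lin (A.α H) ^ A.m H ∣ evalD p f c}
  add_mem' := fun {a b} ha hb H f j hj hf => by
    rw [map_add]; exact dvd_add (ha H f j hj hf) (hb H f j hj hf)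
  zero_mem' := fun H f j hj hf => by rw [map_zero]; exact dvd_zero _
  smul_mem' := fun r c hc H f j hj hf => by
    rw [map_smul, smul_eq_mul]; exact (hc H f j hj hf).mul_left r

/-- `f` is homogeneous of (integer) degree `e` (for `e < 0` this means `f = 0`). -/
def IsHomogZ (f : S K ℓ) (e : ℤ) : Prop :=
  if 0 ≤ e then f.IsHomogeneous e.toNat else f = 0

lemma IsHomogZ.zero (e : ℤ) : IsHomogZ (0 : S K ℓ) e := by
  unfold IsHomogZ; split <;> simp [MvPolynomial.isHomogeneous_zero]

lemma IsHomogZ.add {f g : S K ℓ} {e : ℤ} (hf : IsHomogZ f e) (hg : IsHomogZ g e) :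
    IsHomogZ (f + g) e := by
  unfold IsHomogZ at *
  by_cases h : 0 ≤ e
  · simp only [if_pos h] at *; exact hf.add hg
  · simp only [if_neg h] at *; simp [hf, hg]

lemma IsHomogZ.ksmul {f : S K ℓ} {e : ℤ} (r : K) (hf : IsHomogZ f e) :
    IsHomogZ (r • f) e := by
  unfold IsHomogZ at *
  by_cases h : 0 ≤ e
  · simp only [if_pos h] at *
    rw [MvPolynomial.smul_eq_C_mul]
    simpa using (MvPolynomial.isHomogeneous_C _ r).mul hf
  · simp only [if_neg h] at *; simp [hf]

/-- A vector `v : κ → S` is homogeneous of degree `e` with respect to the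
degree shifts `sh` (with `deg ∂ = deg dx = 0`). -/
def HomogOfDeg {κ : Type*} (sh : κ → ℤ) (v : κ → S K ℓ) (e : ℤ) : Prop :=
  ∀ j, IsHomogZ (v j) (e - sh j)

/-- The degree-`e` homogeneous component of a graded submodule `M`,
as a `K`-subspace. -/
def MComp {κ : Type*} [Fintype κ] (M : Submodule (S K ℓ) (κ → S K ℓ))
    (sh : κ → ℤ) (e : ℤ) : Submodule K (κ → S K ℓ) where
  carrier := {v | v ∈ M ∧ HomogOfDeg sh v e}
  add_mem' := fun {a b} ha hb =>
    ⟨M.add_mem ha.1 hb.1, fun j => by simpa using (ha.2 j).add (hb.2 j)⟩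
  zero_mem' := ⟨M.zero_mem, fun j => by simpa using IsHomogZ.zero (e - sh j)⟩
  smul_mem' := fun r v hv =>
    ⟨by
      rw [show r • v = (C r : S K ℓ) • v from
        funext fun j => by simp [MvPolynomial.smul_eq_C_mul, smul_eq_mul]]
      exact M.smul_mem _ hv.1,
     fun j => by simpa using IsHomogZ.ksmul r (hv.2 j)⟩

/-- The Hilbert function of a graded submodule (shift `sh`). -/
def HilbFn {κ : Type*} [Fintype κ] (M : Submodule (S K ℓ) (κ → S K ℓ))
    (sh : κ → ℤ) (e : ℤ) : ℕ :=
  Module.finrank K (MComp M sh e)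

/-- The Hilbert series of a graded submodule (standard grading, shift `0`). -/
def hilb {κ : Type*} [Fintype κ] (M : Submodule (S K ℓ) (κ → S K ℓ)) :
    PowerSeries ℤ :=
  PowerSeries.mk fun n => (HilbFn M 0 (n : ℤ) : ℤ)

/-- `v ↦ ∑ v_j • g_j`, the map from a free module determined by generators `g`. -/
def combMap {κ : Type*} {n : ℕ} (g : Fin n → (κ → S K ℓ)) :
    (Fin n → S K ℓ) →ₗ[S K ℓ] (κ → S K ℓ) where
  toFun v := ∑ j, v j • g j
  map_add' a b := by simp [add_smul, Finset.sum_add_distrib]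
  map_smul' r a := by simp [Finset.smul_sum, mul_smul]

/-- The linear map given by the matrix `T`. -/
def matMap {n n' : ℕ} (T : Fin n → Fin n' → S K ℓ) :
    (Fin n' → S K ℓ) →ₗ[S K ℓ] (Fin n → S K ℓ) :=
  combMap (fun b a => T a b)

/-- A finite graded free resolution of a graded submodule `M ⊆ (κ → S)`
(with degree shift `sh` on the ambient free module):
`0 → F_len → ⋯ → F_0 → M → 0`, with `F_i` free with homogeneous generator
degrees `dg i`, homogeneous differentials, and exactness. -/
structure GFR {κ : Type*} [Fintype κ] (sh : κ → ℤ)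
    (M : Submodule (S K ℓ) (κ → S K ℓ)) where
  len : ℕ
  rk : ℕ → ℕ
  tail : ∀ i, len < i → rk i = 0
  dg : (i : ℕ) → Fin (rk i) → ℤ
  gen : Fin (rk 0) → (κ → S K ℓ)
  gen_mem : ∀ j, gen j ∈ M
  gen_hom : ∀ j, HomogOfDeg sh (gen j) (dg 0 j)
  mat : (i : ℕ) → Fin (rk i) → Fin (rk (i + 1)) → S K ℓ
  mat_hom : ∀ i a b, IsHomogZ (mat i a b) (dg (i + 1) b - dg i a)
  range_gen : LinearMap.range (combMap gen) = M
  exact0 : LinearMap.ker (combMap gen) = LinearMap.range (matMap (mat 0))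
  exact_succ : ∀ i, LinearMap.ker (matMap (mat i)) = LinearMap.range (matMap (mat (i + 1)))

/-- Castelnuovo–Mumford regularity bound: `reg M ≤ r` iff `M` admits a finite
graded free resolution with `i`-th generator degrees at most `r + i`. -/
def RegLE {κ : Type*} [Fintype κ] (M : Submodule (S K ℓ) (κ → S K ℓ))
    (sh : κ → ℤ) (r : ℤ) : Prop :=
  ∃ R : GFR sh M, ∀ i (j : Fin (R.rk i)), R.dg i j ≤ r + i

/-- Projective dimension bound: `pd_S M ≤ p`. -/
def PdLE {κ : Type*} [Fintype κ] (M : Submodule (S K ℓ) (κ → S K ℓ))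
    (sh : κ → ℤ) (p : ℕ) : Prop :=
  ∃ R : GFR sh M, R.len ≤ p

/-- The coefficient of `dx_{u}` in `ω ∧ dα` where `α` has coefficient vector `a`,
for a `p`-form with coefficients `ω` and a `(p+1)`-subset `u`; linear in `ω`. -/
def wedgeAt (p : ℕ) (a : Fin ℓ → K) (u : Sub ℓ (p + 1)) :
    ((Sub ℓ p) → S K ℓ) →ₗ[S K ℓ] S K ℓ where
  toFun ω := ∑ i : Fin ℓ, if h : i ∈ u.1 then
      ((-1 : S K ℓ)) ^ ((u.1.filter (· < i)).card) * C (a i) *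
        ω ⟨u.1.erase i, by simp [Finset.card_erase_of_mem h, u.2]⟩
    else 0
  map_add' x y := by
    classical
    simp only [Pi.add_apply]
    rw [← Finset.sum_add_distrib]
    refine Finset.sum_congr rfl fun i _ => ?_
    split_ifs with h
    · ring
    · simp
  map_smul' r x := by
    classical
    simp only [Pi.smul_apply, smul_eq_mul, RingHom.id_apply]
    rw [Finset.mul_sum]
    refine Finset.sum_congr rfl fun i _ => ?_
    split_ifs with h
    · ring
    · simp

/-- `Q(A,m)·Ω^p(A,m)`: the module of logarithmic differential `p`-forms,
cleared of denominators (an honest submodule of `Ω^p_V`).  The grading of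
`Ω^p(A,m)` itself is the grading of this module shifted down by `|m|`. -/
def OmegaQ (A : MultiArr K ℓ ι) (p : ℕ) : Submodule (S K ℓ) ((Sub ℓ p) → S K ℓ) where
  carrier := {ω | ∀ H : ι, ∀ u : Sub ℓ (p + 1),
      lin (A.α H) ^ A.m H ∣ wedgeAt p (A.α H) u ω}
  add_mem' := fun {a b} ha hb H u => by
    rw [map_add]; exact dvd_add (ha H u) (hb H u)
  zero_mem' := fun H u => by rw [map_zero]; exact dvd_zero _
  smul_mem' := fun r ω hω H u => by
    rw [map_smul, smul_eq_mul]; exact (hω H u).mul_left r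

/-! ### Auxiliary development for Statement 11 -/

section Aux

variable {K : Type*} [Field K] {ℓ : ℕ}

lemma pderiv_lin (i : Fin ℓ) (a : Fin ℓ → K) : pderiv i (lin a) = C (a i) := by
  unfold lin
  rw [map_sum, Finset.sum_eq_single i]
  · simp
  · intro j _ hj; simp [pderiv_X_of_ne hj]
  · simp

/-- The sign `(-1)^{∑_{x ∈ s} x}`. -/
def sg (K : Type*) [Field K] {ℓ : ℕ} (s : Finset (Fin ℓ)) : S K ℓ :=
  (-1) ^ (∑ x ∈ s, (x : ℕ))

lemma sg_mul_self (s : Finset (Fin ℓ)) : (sg K s) * sg K s = 1 := by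
  rw [sg, ← pow_add]
  exact Even.neg_one_pow ⟨_, rfl⟩

lemma IsHomogZ.sg_mul {f : S K ℓ} {e : ℤ} (s : Finset (Fin ℓ))
    (hf : IsHomogZ f e) : IsHomogZ (sg K s * f) e := by
  have := IsHomogZ.ksmul ((-1 : K) ^ (∑ x ∈ s, (x : ℕ))) hf
  rwa [MvPolynomial.smul_eq_C_mul, map_pow, map_neg, map_one] at this

lemma card_compl_sub {p : ℕ} (s : Sub ℓ p) : s.1ᶜ.card = ℓ - p := by
  rw [Finset.card_compl, s.2, Fintype.card_fin]

/-- The complement of a `p`-subset, as an `(ℓ-p)`-subset. -/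
def scompl {p : ℕ} (s : Sub ℓ p) : Sub ℓ (ℓ - p) := ⟨s.1ᶜ, card_compl_sub s⟩

lemma card_compl_sub' {p : ℕ} (hp : p ≤ ℓ) (u : Sub ℓ (ℓ - p)) : u.1ᶜ.card = p := by
  rw [Finset.card_compl, u.2, Fintype.card_fin]; omega

/-- `φ : Ω^{ℓ-p} → D^p`, `(φ ω)_s = (-1)^{∑ s} ω_{sᶜ}`. -/
def phiFun (K : Type*) [Field K] {ℓ : ℕ} (p : ℕ) (ω : Sub ℓ (ℓ - p) → S K ℓ) :
    Sub ℓ p → S K ℓ :=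
  fun s => sg K s.1 * ω (scompl s)

def psiFun (K : Type*) [Field K] {ℓ : ℕ} {p : ℕ} (hp : p ≤ ℓ)
    (c : Sub ℓ p → S K ℓ) : Sub ℓ (ℓ - p) → S K ℓ :=
  fun u => sg K u.1ᶜ * c ⟨u.1ᶜ, card_compl_sub' hp u⟩

lemma psiFun_phiFun {p : ℕ} (hp : p ≤ ℓ) (ω : Sub ℓ (ℓ - p) → S K ℓ) :
    psiFun K hp (phiFun K p ω) = ω := by
  funext u
  unfold psiFun phiFun scompl
  rw [← mul_assoc, sg_mul_self, one_mul]
  congr 1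
  exact Subtype.ext (compl_compl _)

lemma congr_sub {p : ℕ} (c : Sub ℓ p → S K ℓ) {x y : Finset (Fin ℓ)} (h : x = y)
    (hx : x.card = p) (hy : y.card = p) : c ⟨x, hx⟩ = c ⟨y, hy⟩ := by subst h; rfl

lemma phiFun_psiFun {p : ℕ} (hp : p ≤ ℓ) (c : Sub ℓ p → S K ℓ) :
    phiFun K p (psiFun K hp c) = c := by
  funext s
  unfold psiFun phiFun scompl
  dsimp only
  rw [congr_sub c (compl_compl s.1) _ s.2,
    show ((s.1ᶜ)ᶜ : Finset (Fin ℓ)) = s.1 from compl_compl _,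
    ← mul_assoc, sg_mul_self, one_mul]

/-- The graded `S`-linear isomorphism. -/
def phiEquiv {p : ℕ} (hp : p ≤ ℓ) :
    ((Sub ℓ (ℓ - p)) → S K ℓ) ≃ₗ[S K ℓ] ((Sub ℓ p) → S K ℓ) where
  toFun := phiFun K p
  invFun := psiFun K hp
  left_inv := psiFun_phiFun hp
  right_inv := phiFun_psiFun hp
  map_add' a b := by
    funext s; simp only [phiFun, Pi.add_apply]; ring
  map_smul' r a := by
    funext s
    simp only [phiFun, Pi.smul_apply, smul_eq_mul, RingHom.id_apply]
    ring

lemma homog_phiFun {p : ℕ} {ω : Sub ℓ (ℓ - p) → S K ℓ} {e : ℤ}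
    (h : HomogOfDeg (fun _ => (0 : ℤ)) ω e) :
    HomogOfDeg (fun _ => (0 : ℤ)) (phiFun K p ω) e := by
  intro s
  exact IsHomogZ.sg_mul _ (h _)

lemma homog_psiFun {p : ℕ} (hp : p ≤ ℓ) {c : Sub ℓ p → S K ℓ} {e : ℤ}
    (h : HomogOfDeg (fun _ => (0 : ℤ)) c e) :
    HomogOfDeg (fun _ => (0 : ℤ)) (psiFun K hp c) e := by
  intro u
  exact IsHomogZ.sg_mul _ (h _)

/-- Non-dependent version of a family indexed by `Sub ℓ p`. -/
def ome {ℓ : ℕ} (p : ℕ) (ω : Sub ℓ p → S K ℓ) : Finset (Fin ℓ) → S K ℓ :=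
  fun x => if h : x.card = p then ω ⟨x, h⟩ else 0

lemma ome_apply {p : ℕ} (ω : Sub ℓ p → S K ℓ) (x : Finset (Fin ℓ)) (h : x.card = p) :
    ome p ω x = ω ⟨x, h⟩ := dif_pos h

/-- Non-dependent version of `detM`. -/
def dete {ℓ : ℕ} (p : ℕ) (f : Fin p → S K ℓ) : Finset (Fin ℓ) → S K ℓ :=
  fun t => if h : t.card = p then detM ⟨t, h⟩ f else 0

lemma dete_apply {p : ℕ} (f : Fin p → S K ℓ) (t : Finset (Fin ℓ)) (h : t.card = p) :
    dete p f t = detM ⟨t, h⟩ f := dif_pos h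

lemma wedgeAt_apply (p : ℕ) (a : Fin ℓ → K) (u : Sub ℓ (p + 1))
    (ω : Sub ℓ p → S K ℓ) :
    wedgeAt p a u ω = ∑ i ∈ u.1,
      (-1 : S K ℓ) ^ ((u.1.filter (· < i)).card) * C (a i) * ome p ω (u.1.erase i) := by
  show (∑ i : Fin ℓ, if h : i ∈ u.1 then
      ((-1 : S K ℓ)) ^ ((u.1.filter (· < i)).card) * C (a i) *
        ω ⟨u.1.erase i, by simp [Finset.card_erase_of_mem h, u.2]⟩
    else 0) = _
  rw [← Finset.sum_subset (Finset.subset_univ u.1)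
    (fun x _ hx => dif_neg hx)]
  refine Finset.sum_congr rfl fun i hi => ?_
  rw [dif_pos hi, ome_apply _ _ (by simp [Finset.card_erase_of_mem hi, u.2])]

lemma evalD_apply (p : ℕ) (f : Fin p → S K ℓ) (c : Sub ℓ p → S K ℓ) :
    evalD p f c = ∑ s : Sub ℓ p, c s * detM s f := rfl

lemma filter_lt_orderEmb {p : ℕ} (s : Finset (Fin ℓ)) (hs : s.card = p) (j : Fin p) :
    (s.filter (· < s.orderEmbOfFin hs j)).card = (j : ℕ) := by
  have himg : s.filter (· < s.orderEmbOfFin hs j) =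
      (Finset.Iio j).image (s.orderEmbOfFin hs) := by
    ext x
    simp only [Finset.mem_filter, Finset.mem_image, Finset.mem_Iio]
    constructor
    · rintro ⟨hxs, hlt⟩
      obtain ⟨k, rfl⟩ : ∃ k, s.orderEmbOfFin hs k = x := by
        have hr := s.range_orderEmbOfFin hs
        have : x ∈ Set.range (s.orderEmbOfFin hs) := by rw [hr]; exact hxs
        exact this
      exact ⟨k, (s.orderEmbOfFin hs).lt_iff_lt.1 hlt, rfl⟩
    · rintro ⟨k, hk, rfl⟩
      exact ⟨s.orderEmbOfFin_mem hs k, (s.orderEmbOfFin hs).lt_iff_lt.2 hk⟩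
  rw [himg, Finset.card_image_of_injective _ (s.orderEmbOfFin hs).injective,
    Fin.card_Iio]

lemma orderEmb_erase {p : ℕ} (s : Finset (Fin ℓ)) (hs : s.card = p + 1)
    (j : Fin (p + 1))
    (hcard : (s.erase (s.orderEmbOfFin hs j)).card = p) (k : Fin p) :
    (s.erase (s.orderEmbOfFin hs j)).orderEmbOfFin hcard k
      = s.orderEmbOfFin hs (j.succAbove k) := by
  have huniq := Finset.orderEmbOfFin_unique (s := s.erase (s.orderEmbOfFin hs j))
    (f := fun k : Fin p => s.orderEmbOfFin hs (j.succAbove k)) hcard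
    (fun x => Finset.mem_erase.2
      ⟨fun h => Fin.succAbove_ne j x ((s.orderEmbOfFin hs).injective h),
        s.orderEmbOfFin_mem hs _⟩)
    ((s.orderEmbOfFin hs).strictMono.comp (Fin.strictMono_succAbove j))
  exact (congrFun huniq k).symm

lemma detM_entry {p : ℕ} (s : Sub ℓ p) (f : Fin p → S K ℓ) :
    detM s f = Matrix.det (Matrix.of fun j k : Fin p =>
      pderiv (s.1.orderEmbOfFin s.2 j) (f k)) := by
  unfold detM
  rfl

lemma univ_image_orderEmb {p : ℕ} (s : Finset (Fin ℓ)) (hs : s.card = p) :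
    Finset.univ.image (s.orderEmbOfFin hs) = s := by
  ext x
  simp only [Finset.mem_image, Finset.mem_univ, true_and]
  constructor
  · rintro ⟨k, rfl⟩; exact s.orderEmbOfFin_mem hs k
  · intro hx
    have hr := s.range_orderEmbOfFin hs
    have : x ∈ Set.range (s.orderEmbOfFin hs) := by rw [hr]; exact hx
    obtain ⟨k, hk⟩ := this
    exact ⟨k, hk⟩

lemma sum_orderEmb {p : ℕ} (s : Finset (Fin ℓ)) (hs : s.card = p)
    (g : Fin ℓ → S K ℓ) :
    ∑ i ∈ s, g i = ∑ j : Fin p, g (s.orderEmbOfFin hs j) := by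
  conv_lhs => rw [← univ_image_orderEmb s hs]
  rw [Finset.sum_image (fun a _ b _ h => (s.orderEmbOfFin hs).injective h)]

lemma detM_expand {p : ℕ} (a : Fin ℓ → K) (f : Fin (p + 1) → S K ℓ)
    (hf : f 0 = lin a) (s : Sub ℓ (p + 1)) :
    detM s f = ∑ i ∈ s.1, (-1 : S K ℓ) ^ ((s.1.filter (· < i)).card) * C (a i) *
      dete p (f ∘ Fin.succ) (s.1.erase i) := by
  rw [detM_entry, Matrix.det_succ_column_zero]
  rw [sum_orderEmb s.1 s.2]
  refine Finset.sum_congr rfl fun j _ => ?_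
  have hmem := s.1.orderEmbOfFin_mem s.2 j
  have hcard : (s.1.erase (s.1.orderEmbOfFin s.2 j)).card = p := by
    rw [Finset.card_erase_of_mem hmem, s.2]
    omega
  rw [filter_lt_orderEmb s.1 s.2 j]
  rw [dete_apply _ _ hcard, detM_entry]
  congr 1
  · rw [Matrix.of_apply, hf, pderiv_lin]
  · congr 1
    funext k k'
    simp only [Matrix.submatrix_apply, Matrix.of_apply, Function.comp_apply]
    rw [orderEmb_erase s.1 s.2 j hcard k]

lemma sum_sub {q : ℕ} (g : Sub ℓ q → S K ℓ) :
    ∑ s : Sub ℓ q, g s =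
      ∑ x ∈ Finset.univ.filter (fun x : Finset (Fin ℓ) => x.card = q), ome q g x := by
  rw [Finset.sum_subtype (p := fun x : Finset (Fin ℓ) => x.card = q) _
    (fun x => by simp) (ome q g)]
  exact (Finset.sum_congr rfl fun s _ => (ome_apply g s.1 s.2)).symm

lemma filter_lt_card_add {i : Fin ℓ} (x : Finset (Fin ℓ)) :
    (x.filter (· < i)).card + (xᶜ.filter (· < i)).card = (i : ℕ) := by
  have hdisj : Disjoint (x.filter (· < i)) (xᶜ.filter (· < i)) :=
    Finset.disjoint_filter_filter disjoint_compl_right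
  rw [← Finset.card_union_of_disjoint hdisj, ← Finset.filter_union,
    Finset.union_compl]
  have : (Finset.univ.filter (· < i)) = Finset.Iio i := by
    ext y; simp [Finset.mem_Iio]
  rw [this, Fin.card_Iio]

/-- The key identity: evaluation of `φ ω` against `(α, f₂, …, f_p)` decomposes
into wedge products `ω ∧ dα`. -/
lemma evalD_phiFun {p : ℕ} (hp : p + 1 ≤ ℓ) (a : Fin ℓ → K)
    (f : Fin (p + 1) → S K ℓ) (hf : f 0 = lin a)
    (ω : Sub ℓ (ℓ - (p + 1)) → S K ℓ) :
    evalD (p + 1) f (phiFun K (p + 1) ω)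
      = ∑ t : Sub ℓ p, sg K t.1 * dete p (f ∘ Fin.succ) t.1 *
          wedgeAt (ℓ - (p + 1)) a
            ⟨t.1ᶜ, by rw [Finset.card_compl, t.2, Fintype.card_fin]; omega⟩ ω := by
  have hcc : ∀ t : Sub ℓ p, t.1ᶜ.card = ℓ - (p + 1) + 1 := fun t => by
    rw [Finset.card_compl, t.2, Fintype.card_fin]; omega
  -- rewrite both sides as sums over plain finsets of (set, element) pairs
  have hL : evalD (p + 1) f (phiFun K (p + 1) ω) =
      ∑ x ∈ Finset.univ.filter (fun x : Finset (Fin ℓ) => x.card = p + 1),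
        ∑ i ∈ x, sg K x * ome (ℓ - (p + 1)) ω xᶜ *
          ((-1 : S K ℓ) ^ ((x.filter (· < i)).card) * C (a i) *
            dete p (f ∘ Fin.succ) (x.erase i)) := by
    rw [evalD_apply]
    rw [sum_sub (fun s : Sub ℓ (p+1) => phiFun K (p+1) ω s * detM s f)]
    refine Finset.sum_congr rfl fun x hx => ?_
    have hxc : x.card = p + 1 := by simpa using hx
    rw [ome_apply _ _ hxc]
    show phiFun K (p+1) ω ⟨x, hxc⟩ * detM ⟨x, hxc⟩ f = _
    rw [detM_expand a f hf ⟨x, hxc⟩, Finset.mul_sum]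
    refine Finset.sum_congr rfl fun i hi => ?_
    unfold phiFun scompl
    rw [ome_apply _ _ (card_compl_sub (⟨x, hxc⟩ : Sub ℓ (p+1)))]
  have hR : (∑ t : Sub ℓ p, sg K t.1 * dete p (f ∘ Fin.succ) t.1 *
          wedgeAt (ℓ - (p + 1)) a
            ⟨t.1ᶜ, by rw [Finset.card_compl, t.2, Fintype.card_fin]; omega⟩ ω) =
      ∑ y ∈ Finset.univ.filter (fun y : Finset (Fin ℓ) => y.card = p),
        ∑ i ∈ yᶜ, sg K y * dete p (f ∘ Fin.succ) y *
          ((-1 : S K ℓ) ^ ((yᶜ.filter (· < i)).card) * C (a i) *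
            ome (ℓ - (p + 1)) ω (yᶜ.erase i)) := by
    rw [sum_sub (fun t : Sub ℓ p => sg K t.1 * dete p (f ∘ Fin.succ) t.1 *
          wedgeAt (ℓ - (p + 1)) a ⟨t.1ᶜ, hcc t⟩ ω)]
    refine Finset.sum_congr rfl fun y hy => ?_
    have hyc : y.card = p := by simpa using hy
    rw [ome_apply _ _ hyc]
    show sg K y * dete p (f ∘ Fin.succ) y *
        wedgeAt (ℓ - (p + 1)) a ⟨yᶜ, hcc ⟨y, hyc⟩⟩ ω = _
    rw [wedgeAt_apply, Finset.mul_sum]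
  rw [hL, hR]
  rw [Finset.sum_sigma' , Finset.sum_sigma']
  refine Finset.sum_bij' (i := fun z _ => (⟨z.1.erase z.2, z.2⟩ : Σ _ : Finset (Fin ℓ), Fin ℓ))
    (j := fun z _ => (⟨insert z.2 z.1, z.2⟩ : Σ _ : Finset (Fin ℓ), Fin ℓ))
    ?_ ?_ ?_ ?_ ?_
  · rintro ⟨x, i⟩ hz
    rw [Finset.mem_sigma, Finset.mem_filter] at hz ⊢
    obtain ⟨⟨-, hxc⟩, hix⟩ := hz
    exact ⟨⟨Finset.mem_univ _, by rw [Finset.card_erase_of_mem hix, hxc]; omega⟩,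
      by simp⟩
  · rintro ⟨y, i⟩ hz
    rw [Finset.mem_sigma, Finset.mem_filter] at hz ⊢
    obtain ⟨⟨-, hyc⟩, hiy⟩ := hz
    have hiy' : i ∉ y := by simpa using hiy
    exact ⟨⟨Finset.mem_univ _, by rw [Finset.card_insert_of_notMem hiy', hyc]⟩,
      Finset.mem_insert_self _ _⟩
  · rintro ⟨x, i⟩ hz
    rw [Finset.mem_sigma, Finset.mem_filter] at hz
    obtain ⟨⟨-, hxc⟩, hix⟩ := hz
    simp only [Sigma.mk.inj_iff, heq_eq_eq, and_true]
    exact Finset.insert_erase hix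
  · rintro ⟨y, i⟩ hz
    rw [Finset.mem_sigma, Finset.mem_filter] at hz
    obtain ⟨⟨-, hyc⟩, hiy⟩ := hz
    have hiy' : i ∉ y := by simpa using hiy
    simp only [Sigma.mk.inj_iff, heq_eq_eq, and_true]
    exact Finset.erase_insert hiy'
  · rintro ⟨x, i⟩ hz
    rw [Finset.mem_sigma, Finset.mem_filter] at hz
    obtain ⟨⟨-, hxc⟩, hix⟩ := hz
    -- value equality
    set t := x.erase i with ht
    have hit : i ∉ t := Finset.notMem_erase _ _
    have hxt : x = insert i t := (Finset.insert_erase hix).symm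
    have h1 : tᶜ.erase i = xᶜ := by
      rw [ht, Finset.compl_erase, Finset.erase_insert (by simpa using hix)]
    have h2 : x.filter (· < i) = t.filter (· < i) := by
      rw [hxt, Finset.filter_insert, if_neg (lt_irrefl i)]
    have h3 : tᶜ.filter (· < i) = xᶜ.filter (· < i) := by
      rw [ht, Finset.compl_erase, Finset.filter_insert, if_neg (lt_irrefl i)]
    have h4 : sg K x = (-1 : S K ℓ) ^ (i : ℕ) * sg K t := by
      rw [sg, sg, hxt, Finset.sum_insert hit, pow_add]
    have h5 : ((-1 : S K ℓ)) ^ ((xᶜ.filter (· < i)).card)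
        = (-1 : S K ℓ) ^ (i : ℕ) * (-1 : S K ℓ) ^ ((x.filter (· < i)).card) := by
      rw [← pow_add]
      rw [show (i : ℕ) + (x.filter (· < i)).card
          = 2 * (x.filter (· < i)).card + (xᶜ.filter (· < i)).card by
        have := filter_lt_card_add (i := i) x; omega]
      rw [pow_add, pow_mul]
      norm_num
    rw [h2] at h5
    show sg K x * ome (ℓ - (p + 1)) ω xᶜ * _ = _
    rw [h1, h2, h3, h4, h5]
    ring

lemma dvd_of_dvd_sg_mul {d w : S K ℓ} (s : Finset (Fin ℓ)) (h : d ∣ sg K s * w) :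
    d ∣ w := by
  have h2 := h.mul_left (sg K s)
  rwa [← mul_assoc, sg_mul_self, one_mul] at h2

lemma phiFun_mem_Dmod {ι : Type*} [Fintype ι] (A : MultiArr K ℓ ι) {p : ℕ}
    (hp : p ≤ ℓ) {ω : Sub ℓ (ℓ - p) → S K ℓ} (hω : ω ∈ OmegaQ A (ℓ - p)) :
    phiFun K p ω ∈ Dmod A p := by
  intro H f j hj hfj
  rcases p with _ | p'
  · exact j.elim0
  · have hj0 : j = 0 := Fin.ext hj
    subst hj0
    rw [evalD_phiFun hp (A.α H) f hfj ω]
    exact Finset.dvd_sum fun t _ => (hω H _).mul_left _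

lemma emb_congr {p : ℕ} {x y : Finset (Fin ℓ)} (h : x = y)
    (hx : x.card = p) (hy : y.card = p) (k : Fin p) :
    x.orderEmbOfFin hx k = y.orderEmbOfFin hy k := by subst h; rfl

lemma mem_OmegaQ_of_phiFun {ι : Type*} [Fintype ι] (A : MultiArr K ℓ ι) {p' : ℕ}
    (hp : p' + 1 ≤ ℓ) {ω : Sub ℓ (ℓ - (p' + 1)) → S K ℓ}
    (hc : phiFun K (p' + 1) ω ∈ Dmod A (p' + 1)) :
    ω ∈ OmegaQ A (ℓ - (p' + 1)) := by
  intro H u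
  have hu : u.1.card = ℓ - (p' + 1) + 1 := u.2
  have ht : u.1ᶜ.card = p' := by
    rw [Finset.card_compl, hu, Fintype.card_fin]; omega
  set t := u.1ᶜ with htdef
  set f : Fin (p' + 1) → S K ℓ :=
    Fin.cons (lin (A.α H)) (fun k => X (t.orderEmbOfFin ht k)) with hfdef
  have h0 : f 0 = lin (A.α H) := rfl
  have hfk : ∀ k : Fin p', (f ∘ Fin.succ) k = X (t.orderEmbOfFin ht k) := by
    intro k
    simp only [hfdef, Function.comp_apply, Fin.cons_succ]
  have hdvd := hc H f 0 rfl h0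
  rw [evalD_phiFun hp (A.α H) f h0 ω] at hdvd
  have hdet : ∀ tt : Sub ℓ p',
      dete p' (f ∘ Fin.succ) tt.1 = if tt.1 = t then 1 else 0 := by
    intro tt
    by_cases h : tt.1 = t
    · rw [if_pos h, dete_apply _ _ tt.2, detM_entry]
      have hone : (Matrix.of fun j k : Fin p' =>
          pderiv (tt.1.orderEmbOfFin tt.2 j) ((f ∘ Fin.succ) k)) = 1 := by
        funext j k
        rw [Matrix.of_apply, hfk k, emb_congr h tt.2 ht j, pderiv_X,
          Pi.single_apply, Matrix.one_apply]
        by_cases hjk : j = k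
        · subst hjk; simp
        · rw [if_neg (fun hEq : t.orderEmbOfFin ht k = t.orderEmbOfFin ht j =>
            hjk ((t.orderEmbOfFin ht).injective hEq).symm), if_neg hjk]
      rw [hone, Matrix.det_one]
    · rw [if_neg h, dete_apply _ _ tt.2, detM_entry]
      have hex : ∃ k0 : Fin p', t.orderEmbOfFin ht k0 ∉ tt.1 := by
        by_contra hall
        push_neg at hall
        have hsub : t ⊆ tt.1 := by
          intro x hx
          have hxr : x ∈ Set.range (t.orderEmbOfFin ht) := by
            rw [t.range_orderEmbOfFin ht]; exact hx
          obtain ⟨k, rfl⟩ := hxr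
          exact hall k
        exact h (Finset.eq_of_subset_of_card_le hsub (by rw [tt.2, ht])).symm
      obtain ⟨k0, hk0⟩ := hex
      apply Matrix.det_eq_zero_of_column_eq_zero k0
      intro j
      rw [Matrix.of_apply, hfk k0]
      exact pderiv_X_of_ne fun hEq => hk0 (hEq ▸ tt.1.orderEmbOfFin_mem tt.2 j)
  have hcollapse : (∑ tt : Sub ℓ p', sg K tt.1 * dete p' (f ∘ Fin.succ) tt.1 *
        wedgeAt (ℓ - (p' + 1)) (A.α H)
          ⟨tt.1ᶜ, by rw [Finset.card_compl, tt.2, Fintype.card_fin]; omega⟩ ω)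
      = sg K t * wedgeAt (ℓ - (p' + 1)) (A.α H) u ω := by
    rw [Fintype.sum_eq_single (⟨t, ht⟩ : Sub ℓ p')]
    · rw [hdet, if_pos rfl, mul_one]
      congr 1
      apply congrArg (fun u' => wedgeAt (ℓ - (p' + 1)) (A.α H) u' ω)
      apply Subtype.ext
      show (tᶜ : Finset (Fin ℓ)) = u.1
      rw [htdef]
      exact compl_compl _
    · intro b hb
      rw [hdet, if_neg (fun hEq => hb (Subtype.ext hEq)), mul_zero, zero_mul]
  rw [hcollapse] at hdvd
  exact dvd_of_dvd_sg_mul t hdvd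

lemma OmegaQ_top {ι : Type*} [Fintype ι] (A : MultiArr K ℓ ι)
    {ω : Sub ℓ (ℓ - 0) → S K ℓ} : ω ∈ OmegaQ A (ℓ - 0) := by
  intro H u
  exfalso
  have h1 : u.1.card = ℓ - 0 + 1 := u.2
  have h2 := Finset.card_le_univ u.1
  rw [Fintype.card_fin] at h2
  omega

lemma map_phi_eq {ι : Type*} [Fintype ι] (A : MultiArr K ℓ ι) {p : ℕ} (hp : p ≤ ℓ) :
    Submodule.map ((phiEquiv (K := K) hp : ((Sub ℓ (ℓ - p)) → S K ℓ) ≃ₗ[S K ℓ]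
        ((Sub ℓ p) → S K ℓ)) : ((Sub ℓ (ℓ - p)) → S K ℓ) →ₗ[S K ℓ] _)
      (OmegaQ A (ℓ - p)) = Dmod A p := by
  ext c
  simp only [Submodule.mem_map]
  constructor
  · rintro ⟨ω, hω, rfl⟩
    exact phiFun_mem_Dmod A hp hω
  · intro hc
    refine ⟨psiFun K hp c, ?_, phiFun_psiFun hp c⟩
    rcases p with _ | p'
    · exact OmegaQ_top A
    · apply mem_OmegaQ_of_phiFun A hp
      rw [phiFun_psiFun hp c]
      exact hc

lemma homog_phi_iff {p : ℕ} (hp : p ≤ ℓ) (v : Sub ℓ (ℓ - p) → S K ℓ) (e : ℤ) :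
    HomogOfDeg (fun _ => (0 : ℤ)) v e ↔
      HomogOfDeg (fun _ => (0 : ℤ)) (phiEquiv (K := K) hp v) e := by
  constructor
  · exact homog_phiFun
  · intro h
    have h2 := homog_psiFun hp h
    rwa [show psiFun K hp (phiEquiv (K := K) hp v) = v from psiFun_phiFun hp v] at h2

lemma combMap_comp {κ κ' : Type*} {n : ℕ} (φ : (κ → S K ℓ) →ₗ[S K ℓ] (κ' → S K ℓ))
    (g : Fin n → (κ → S K ℓ)) :
    combMap (fun j => φ (g j)) = φ ∘ₗ combMap g := by
  apply LinearMap.ext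
  intro v
  simp only [combMap, LinearMap.coe_mk, AddHom.coe_mk, LinearMap.comp_apply,
    map_sum, map_smul]

lemma RegLE_of_map {κ κ' : Type*} [Fintype κ] [Fintype κ']
    (φ : (κ → S K ℓ) ≃ₗ[S K ℓ] (κ' → S K ℓ))
    (hdeg : ∀ (v : κ → S K ℓ) (e : ℤ), HomogOfDeg (fun _ => (0 : ℤ)) v e →
      HomogOfDeg (fun _ => (0 : ℤ)) (φ v) e)
    {M : Submodule (S K ℓ) (κ → S K ℓ)} {r : ℤ}
    (h : RegLE M (fun _ => 0) r) :
    RegLE (Submodule.map (φ : (κ → S K ℓ) →ₗ[S K ℓ] (κ' → S K ℓ)) M)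
      (fun _ => 0) r := by
  obtain ⟨R, hR⟩ := h
  set φ' : (κ → S K ℓ) →ₗ[S K ℓ] (κ' → S K ℓ) := (φ : (κ → S K ℓ) →ₗ[S K ℓ] (κ' → S K ℓ)) with hφ'
  refine ⟨⟨R.len, R.rk, R.tail, R.dg,
    fun j => φ' (R.gen j),
    fun j => Submodule.mem_map_of_mem (R.gen_mem j),
    fun j => hdeg _ _ (R.gen_hom j),
    R.mat, R.mat_hom,
    ?_, ?_, R.exact_succ⟩, hR⟩
  · rw [combMap_comp φ' R.gen, LinearMap.range_comp, R.range_gen, hφ']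
  · rw [combMap_comp φ' R.gen, hφ', LinearEquiv.ker_comp, R.exact0]

lemma map_symm_map {A B : Type*} [AddCommMonoid A] [AddCommMonoid B]
    [Module (S K ℓ) A] [Module (S K ℓ) B] (e : A ≃ₗ[S K ℓ] B)
    (P : Submodule (S K ℓ) A) :
    Submodule.map (e.symm : B →ₗ[S K ℓ] A)
      (Submodule.map (e : A →ₗ[S K ℓ] B) P) = P := by
  rw [← Submodule.map_comp]
  have hcomp : (e.symm : B →ₗ[S K ℓ] A) ∘ₗ (e : A →ₗ[S K ℓ] B) = LinearMap.id := by
    apply LinearMap.ext; intro x; simp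
  rw [hcomp, Submodule.map_id]

lemma RegLE_shift {κ : Type*} [Fintype κ] {M : Submodule (S K ℓ) (κ → S K ℓ)}
    (c c' : ℤ) {r : ℤ} (h : RegLE M (fun _ => c) r) :
    RegLE M (fun _ => c') (r + (c' - c)) := by
  obtain ⟨R, hR⟩ := h
  refine ⟨⟨R.len, R.rk, R.tail,
    fun i j => R.dg i j + (c' - c),
    R.gen, R.gen_mem,
    fun j k => by
      rw [show R.dg 0 j + (c' - c) - (fun _ : κ => c') k = R.dg 0 j - c by
        simp only []; ring]
      exact R.gen_hom j k,
    R.mat,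
    fun i a b => by
      rw [show R.dg (i + 1) b + (c' - c) - (R.dg i a + (c' - c))
          = R.dg (i + 1) b - R.dg i a by ring]
      exact R.mat_hom i a b,
    R.range_gen, R.exact0, R.exact_succ⟩,
    fun i j => by
      show R.dg i j + (c' - c) ≤ r + (c' - c) + ↑i
      have := hR i j; omega⟩

end Aux

/-- there is a degree-preserving `S`-linear isomorphism of the
ambient modules carrying `Q(A,m)·Ω^{ℓ-p}(A,m)` onto `D^p(A,m)`; in particular
`reg D^p(A,m) = |m| + reg Ω^{ℓ-p}(A,m)`. -/
theorem stmt_11 {K : Type*} [Field K] {ℓ : ℕ} {ι : Type*} [Fintype ι]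
    (A : MultiArr K ℓ ι) (p : ℕ) (hp : p ≤ ℓ) :
    (∃ φ : ((Sub ℓ (ℓ - p)) → S K ℓ) ≃ₗ[S K ℓ] ((Sub ℓ p) → S K ℓ),
      (∀ (v : (Sub ℓ (ℓ - p)) → S K ℓ) (e : ℤ),
        HomogOfDeg (fun _ => 0) v e ↔ HomogOfDeg (fun _ => 0) (φ v) e) ∧
      Submodule.map (φ : ((Sub ℓ (ℓ - p)) → S K ℓ) →ₗ[S K ℓ] _)
        (OmegaQ A (ℓ - p)) = Dmod A p)
    ∧ ∀ r : ℤ, RegLE (Dmod A p) (fun _ => 0) r ↔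
        RegLE (OmegaQ A (ℓ - p)) (fun _ => -(A.size : ℤ)) (r - A.size) := by
  have key := map_phi_eq A hp
  refine ⟨⟨phiEquiv hp, homog_phi_iff hp, key⟩, ?_⟩
  intro r
  have hΩtoD : RegLE (OmegaQ A (ℓ - p)) (fun _ => 0) r →
      RegLE (Dmod A p) (fun _ => 0) r := by
    intro h
    have h2 := RegLE_of_map (phiEquiv (K := K) hp)
      (fun v e => (homog_phi_iff hp v e).1) h
    rwa [key] at h2
  have hDtoΩ : RegLE (Dmod A p) (fun _ => 0) r →
      RegLE (OmegaQ A (ℓ - p)) (fun _ => 0) r := by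
    intro h
    rw [← key] at h
    have hdeg : ∀ (v : Sub ℓ p → S K ℓ) (e : ℤ),
        HomogOfDeg (fun _ => (0 : ℤ)) v e →
        HomogOfDeg (fun _ => (0 : ℤ)) ((phiEquiv (K := K) hp).symm v) e :=
      fun v e hv => homog_psiFun hp hv
    have h2 := RegLE_of_map (phiEquiv (K := K) hp).symm hdeg h
    rwa [map_symm_map] at h2
  constructor
  · intro h
    have h1 := hDtoΩ h
    have h2 := RegLE_shift (0 : ℤ) (-(A.size : ℤ)) h1
    rwa [show r + (-(A.size : ℤ) - 0) = r - A.size by ring] at h2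
  · intro h
    have h2 := RegLE_shift (-(A.size : ℤ)) (0 : ℤ) h
    rw [show r - (A.size : ℤ) + (0 - -(A.size : ℤ)) = r by ring] at h2
    exact hΩtoD h2

end STpaper
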